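/- Let N, L, c_sp be positive integers, let P be an L-level sparse block collection with sparsity constant c_sp, and let M ∈ ℝ^{N×N}. Then for every x ∈ ℝ^N it holds that Σ_{(t,s)∈P} ‖M_{ts} x_s‖₂² ≤ c_sp · L · (max_{(t,s)∈P} ‖M_{ts}‖₂)² · ‖x‖₂², where ‖M_{ts}‖₂ denotes the spectral norm of the submatrix (M_{ij})_{i∈t, j∈s} and the maximum over the empty set is taken to be 0. -/

import Mathlib

open Finset

/-- The Euclidean norm on `ℝ^N`. -/
noncomputable def euclNorm {N : ℕ} (v : Fin N → ℝ) : ℝ :=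
  Real.sqrt (∑ i, v i ^ 2)

lemma enorm_nonneg' {N : ℕ} (v : Fin N → ℝ) : 0 ≤ euclNorm v := Real.sqrt_nonneg _

lemma enorm_sq' {N : ℕ} (v : Fin N → ℝ) : euclNorm v ^ 2 = ∑ i, v i ^ 2 := by
  rw [euclNorm, Real.sq_sqrt]; positivity

lemma enorm_smul' {N : ℕ} (a : ℝ) (v : Fin N → ℝ) : euclNorm (a • v) = |a| * euclNorm v := by
  simp only [euclNorm, Pi.smul_apply, smul_eq_mul, mul_pow, ← Finset.mul_sum]
  rw [Real.sqrt_mul (sq_nonneg a), Real.sqrt_sq_eq_abs]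

lemma enorm_zero' {N : ℕ} : euclNorm (0 : Fin N → ℝ) = 0 := by
  simp [euclNorm]

lemma enorm_mulVec_le {N : ℕ} (A : Matrix (Fin N) (Fin N) ℝ) (v : Fin N → ℝ) :
    euclNorm (A.mulVec v) ≤ Real.sqrt (∑ i, ∑ j, A i j ^ 2) * euclNorm v := by
  rw [euclNorm, euclNorm, ← Real.sqrt_mul (by positivity)]
  apply Real.sqrt_le_sqrt
  rw [Finset.sum_mul]
  apply Finset.sum_le_sum
  intro i _
  have := Finset.sum_mul_sq_le_sq_mul_sq Finset.univ (fun j => A i j) v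
  simpa [Matrix.mulVec, dotProduct] using this

/-- `‖M_{ts} x_s‖₂² = Σ_{i∈t} (Σ_{j∈s} M_{ij} x_j)²`. -/
def blockNormSq {N : ℕ} (M : Matrix (Fin N) (Fin N) ℝ)
    (t s : Finset (Fin N)) (x : Fin N → ℝ) : ℝ :=
  ∑ i ∈ t, (∑ j ∈ s, M i j * x j) ^ 2

/-- An `L`-level sparse block collection with sparsity constant `c_sp`: a finite set `P`
of blocks `(t,s)`, `t,s ⊆ {1,…,N}`, with a level function `lvl : P → {1,…,L}` such that
the product index sets are pairwise disjoint, row (resp. column) clusters of blocks of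
the same level are equal or disjoint, and on each level at most `c_sp` blocks share a
given row (resp. column) cluster. -/
structure SparseBlockCollection (N L csp : ℕ) where
  P : Finset (Finset (Fin N) × Finset (Fin N))
  lvl : Finset (Fin N) × Finset (Fin N) → ℕ
  lvl_range : ∀ b ∈ P, 1 ≤ lvl b ∧ lvl b ≤ L
  prod_disjoint : ∀ b ∈ P, ∀ b' ∈ P, b ≠ b' → Disjoint (b.1 ×ˢ b.2) (b'.1 ×ˢ b'.2)
  rows_eq_or_disjoint : ∀ b ∈ P, ∀ b' ∈ P, lvl b = lvl b' → b.1 = b'.1 ∨ Disjoint b.1 b'.1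
  cols_eq_or_disjoint : ∀ b ∈ P, ∀ b' ∈ P, lvl b = lvl b' → b.2 = b'.2 ∨ Disjoint b.2 b'.2
  row_sparsity : ∀ ℓ : ℕ, ∀ t : Finset (Fin N),
    (P.filter (fun b => lvl b = ℓ ∧ b.1 = t)).card ≤ csp
  col_sparsity : ∀ ℓ : ℕ, ∀ s : Finset (Fin N),
    (P.filter (fun b => lvl b = ℓ ∧ b.2 = s)).card ≤ csp

/-- The spectral (Euclidean operator) norm of a matrix: the supremum of `‖Mx‖₂` over the
unit ball `‖x‖₂ ≤ 1`. -/
noncomputable def specNorm {N : ℕ} (M : Matrix (Fin N) (Fin N) ℝ) : ℝ :=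
  sSup {r : ℝ | ∃ x : Fin N → ℝ, euclNorm x ≤ 1 ∧ r = euclNorm (M.mulVec x)}

lemma specNorm_bddAbove {N : ℕ} (A : Matrix (Fin N) (Fin N) ℝ) :
    BddAbove {r : ℝ | ∃ x : Fin N → ℝ, euclNorm x ≤ 1 ∧ r = euclNorm (A.mulVec x)} := by
  refine ⟨Real.sqrt (∑ i, ∑ j, A i j ^ 2), ?_⟩
  rintro r ⟨x, hx, rfl⟩
  calc euclNorm (A.mulVec x) ≤ Real.sqrt (∑ i, ∑ j, A i j ^ 2) * euclNorm x :=
        enorm_mulVec_le A x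
    _ ≤ Real.sqrt (∑ i, ∑ j, A i j ^ 2) * 1 := by
        apply mul_le_mul_of_nonneg_left hx (Real.sqrt_nonneg _)
    _ = _ := mul_one _

lemma specNorm_nonneg {N : ℕ} (A : Matrix (Fin N) (Fin N) ℝ) : 0 ≤ specNorm A := by
  apply le_csSup (specNorm_bddAbove A)
  exact ⟨0, by simp [enorm_zero'], by simp [Matrix.mulVec_zero, enorm_zero']⟩

lemma enorm_mulVec_le_specNorm {N : ℕ} (A : Matrix (Fin N) (Fin N) ℝ) (v : Fin N → ℝ) :
    euclNorm (A.mulVec v) ≤ specNorm A * euclNorm v := by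
  by_cases h : euclNorm v = 0
  · have hsum : ∑ i, v i ^ 2 = 0 := by
      have := Real.sqrt_eq_zero (by positivity : (0:ℝ) ≤ ∑ i, v i ^ 2) |>.mp h
      exact this
    have hv : v = 0 := by
      funext i
      have := (Finset.sum_eq_zero_iff_of_nonneg (fun j _ => sq_nonneg (v j))).mp hsum i
        (Finset.mem_univ i)
      exact pow_eq_zero_iff (by norm_num) |>.mp this
    simp [hv, Matrix.mulVec_zero, enorm_zero', h]
  · have hpos : 0 < euclNorm v := lt_of_le_of_ne (enorm_nonneg' v) (Ne.symm h)
    have hz : euclNorm ((euclNorm v)⁻¹ • v) = 1 := by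
      rw [enorm_smul', abs_of_pos (inv_pos.2 hpos), inv_mul_cancel₀ h]
    have hmem : euclNorm (A.mulVec ((euclNorm v)⁻¹ • v)) ∈
        {r : ℝ | ∃ x : Fin N → ℝ, euclNorm x ≤ 1 ∧ r = euclNorm (A.mulVec x)} :=
      ⟨_, le_of_eq hz, rfl⟩
    have hle := le_csSup (specNorm_bddAbove A) hmem
    rw [Matrix.mulVec_smul, enorm_smul', abs_of_pos (inv_pos.2 hpos)] at hle
    calc euclNorm (A.mulVec v) = euclNorm v * ((euclNorm v)⁻¹ * euclNorm (A.mulVec v)) := by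
          field_simp
      _ ≤ euclNorm v * specNorm A := mul_le_mul_of_nonneg_left hle (le_of_lt hpos)
      _ = specNorm A * euclNorm v := mul_comm _ _

/-- The matrix agreeing with `M` on the block `t × s` and vanishing elsewhere; its
spectral norm equals the spectral norm of the submatrix `(M_{ij})_{i∈t, j∈s}`. -/
def blockMatrix {N : ℕ} (M : Matrix (Fin N) (Fin N) ℝ) (t s : Finset (Fin N)) :
    Matrix (Fin N) (Fin N) ℝ :=
  fun i j => if i ∈ t ∧ j ∈ s then M i j else 0

lemma blockNormSq_le {N : ℕ} (M : Matrix (Fin N) (Fin N) ℝ) (t s : Finset (Fin N))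
    (x : Fin N → ℝ) :
    blockNormSq M t s x ≤ specNorm (blockMatrix M t s) ^ 2 * ∑ j ∈ s, x j ^ 2 := by
  set y : Fin N → ℝ := fun j => if j ∈ s then x j else 0 with hy
  have hsq : ∀ (p : Prop) [Decidable p] (a : ℝ), (if p then a else 0) ^ 2
      = if p then a ^ 2 else 0 := by intro p _ a; split <;> simp
  have hmv : ∀ i, (blockMatrix M t s).mulVec y i
      = if i ∈ t then ∑ j ∈ s, M i j * x j else 0 := by
    intro i
    simp only [Matrix.mulVec, dotProduct, blockMatrix, hy]
    by_cases hi : i ∈ t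
    · simp only [hi, true_and, if_true]
      have : ∀ j, (if j ∈ s then M i j else 0) * (if j ∈ s then x j else 0)
          = if j ∈ s then M i j * x j else 0 := by intro j; split <;> simp
      simp only [this]
      rw [Finset.sum_ite_mem, Finset.univ_inter]
    · simp [hi]
  have h1 : blockNormSq M t s x = euclNorm ((blockMatrix M t s).mulVec y) ^ 2 := by
    rw [enorm_sq']
    simp only [hmv, hsq]
    rw [Finset.sum_ite_mem, Finset.univ_inter, blockNormSq]
  have h2 : euclNorm y ^ 2 = ∑ j ∈ s, x j ^ 2 := by
    rw [enorm_sq']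
    simp only [hy, hsq]
    rw [Finset.sum_ite_mem, Finset.univ_inter]
  rw [h1, ← h2, ← mul_pow]
  exact pow_le_pow_left₀ (enorm_nonneg' _) (enorm_mulVec_le_specNorm _ _) 2

lemma sum_cols_le {N L csp : ℕ} (C : SparseBlockCollection N L csp) (x : Fin N → ℝ) :
    ∑ b ∈ C.P, (∑ j ∈ b.2, x j ^ 2) ≤ (csp : ℝ) * (L : ℝ) * ∑ j, x j ^ 2 := by
  have hmaps : ∀ b ∈ C.P, C.lvl b ∈ Finset.Icc 1 L := by
    intro b hb
    rw [Finset.mem_Icc]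
    exact C.lvl_range b hb
  rw [← Finset.sum_fiberwise_of_maps_to hmaps]
  have hlev : ∀ ℓ ∈ Finset.Icc 1 L,
      ∑ b ∈ C.P.filter (fun b => C.lvl b = ℓ), (∑ j ∈ b.2, x j ^ 2)
        ≤ (csp : ℝ) * ∑ j, x j ^ 2 := by
    intro ℓ _
    set Q := C.P.filter (fun b => C.lvl b = ℓ) with hQ
    have himg : ∀ b ∈ Q, b.2 ∈ Q.image Prod.snd := fun b hb => Finset.mem_image_of_mem _ hb
    rw [← Finset.sum_fiberwise_of_maps_to himg]
    have hfiber : ∀ s' ∈ Q.image Prod.snd,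
        ∑ b ∈ Q.filter (fun b => b.2 = s'), (∑ j ∈ b.2, x j ^ 2)
          ≤ (csp : ℝ) * ∑ j ∈ s', x j ^ 2 := by
      intro s' _
      have hxnn : (0:ℝ) ≤ ∑ j ∈ s', x j ^ 2 := by positivity
      calc ∑ b ∈ Q.filter (fun b => b.2 = s'), (∑ j ∈ b.2, x j ^ 2)
          = ∑ _b ∈ Q.filter (fun b => b.2 = s'), (∑ j ∈ s', x j ^ 2) := by
            apply Finset.sum_congr rfl
            intro b hb
            rw [(Finset.mem_filter.mp hb).2]
        _ = ((Q.filter (fun b => b.2 = s')).card : ℝ) * ∑ j ∈ s', x j ^ 2 := by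
            rw [Finset.sum_const, nsmul_eq_mul]
        _ ≤ (csp : ℝ) * ∑ j ∈ s', x j ^ 2 := by
            apply mul_le_mul_of_nonneg_right _ hxnn
            have : Q.filter (fun b => b.2 = s')
                = C.P.filter (fun b => C.lvl b = ℓ ∧ b.2 = s') := by
              rw [hQ, Finset.filter_filter]
            rw [this]
            exact_mod_cast C.col_sparsity ℓ s'
    have hdisj : Set.PairwiseDisjoint ↑(Q.image Prod.snd) (id : Finset (Fin N) → Finset (Fin N)) := by
      intro s' hs' s'' hs'' hne
      obtain ⟨b, hb, rfl⟩ := Finset.mem_image.mp hs'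
      obtain ⟨b', hb', rfl⟩ := Finset.mem_image.mp hs''
      have hbP := Finset.mem_filter.mp hb
      have hb'P := Finset.mem_filter.mp hb'
      have := C.cols_eq_or_disjoint b hbP.1 b' hb'P.1 (hbP.2.trans hb'P.2.symm)
      rcases this with h | h
      · exact absurd h hne
      · exact h
    calc ∑ s' ∈ Q.image Prod.snd, ∑ b ∈ Q.filter (fun b => b.2 = s'), (∑ j ∈ b.2, x j ^ 2)
        ≤ ∑ s' ∈ Q.image Prod.snd, (csp : ℝ) * ∑ j ∈ s', x j ^ 2 :=
          Finset.sum_le_sum hfiber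
      _ = (csp : ℝ) * ∑ s' ∈ Q.image Prod.snd, ∑ j ∈ s', x j ^ 2 := by
          rw [Finset.mul_sum]
      _ = (csp : ℝ) * ∑ j ∈ (Q.image Prod.snd).biUnion id, x j ^ 2 := by
          rw [Finset.sum_biUnion hdisj]; rfl
      _ ≤ (csp : ℝ) * ∑ j, x j ^ 2 := by
          apply mul_le_mul_of_nonneg_left _ (Nat.cast_nonneg csp)
          exact Finset.sum_le_sum_of_subset_of_nonneg (Finset.subset_univ _)
            (fun j _ _ => sq_nonneg (x j))
  calc ∑ ℓ ∈ Finset.Icc 1 L, ∑ b ∈ C.P.filter (fun b => C.lvl b = ℓ), (∑ j ∈ b.2, x j ^ 2)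
      ≤ ∑ _ℓ ∈ Finset.Icc 1 L, (csp : ℝ) * ∑ j, x j ^ 2 := Finset.sum_le_sum hlev
    _ = (L : ℝ) * ((csp : ℝ) * ∑ j, x j ^ 2) := by
        rw [Finset.sum_const, nsmul_eq_mul, Nat.card_Icc]
        norm_num
    _ = (csp : ℝ) * (L : ℝ) * ∑ j, x j ^ 2 := by ring

/-- For an `L`-level sparse block collection `P` with sparsity constant `c_sp` and any
matrix `M`, `Σ_{(t,s)∈P} ‖M_{ts} x_s‖₂² ≤ c_sp · L · (max_{(t,s)∈P} ‖M_{ts}‖₂)² · ‖x‖₂²`,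
where the maximum over the empty set is `0`. -/
theorem block_spectral_bound
    (N L csp : ℕ) (hN : 0 < N) (hL : 0 < L) (hcsp : 0 < csp)
    (C : SparseBlockCollection N L csp)
    (M : Matrix (Fin N) (Fin N) ℝ) :
    ∀ x : Fin N → ℝ,
      ∑ b ∈ C.P, blockNormSq M b.1 b.2 x ≤
        (csp : ℝ) * (L : ℝ) * (⨆ b ∈ C.P, specNorm (blockMatrix M b.1 b.2)) ^ 2
          * euclNorm x ^ 2 := by
  intro x
  set S : ℝ := ⨆ b ∈ C.P, specNorm (blockMatrix M b.1 b.2) with hS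
  have hble : ∀ b ∈ C.P, specNorm (blockMatrix M b.1 b.2) ≤ S := by
    intro b hb
    have h1 : (⨆ _ : b ∈ C.P, specNorm (blockMatrix M b.1 b.2))
        = specNorm (blockMatrix M b.1 b.2) :=
      ciSup_pos (f := fun _ : b ∈ C.P => specNorm (blockMatrix M b.1 b.2)) hb
    rw [hS, ← h1]
    exact le_ciSup (f := fun b => ⨆ _ : b ∈ C.P, specNorm (blockMatrix M b.1 b.2))
      (Set.Finite.bddAbove (Set.finite_range _)) b
  have key : ∀ b ∈ C.P, blockNormSq M b.1 b.2 x ≤ S ^ 2 * ∑ j ∈ b.2, x j ^ 2 := by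
    intro b hb
    refine (blockNormSq_le M b.1 b.2 x).trans ?_
    apply mul_le_mul_of_nonneg_right _ (by positivity)
    exact pow_le_pow_left₀ (specNorm_nonneg _) (hble b hb) 2
  calc ∑ b ∈ C.P, blockNormSq M b.1 b.2 x
      ≤ ∑ b ∈ C.P, S ^ 2 * ∑ j ∈ b.2, x j ^ 2 := Finset.sum_le_sum key
    _ = S ^ 2 * ∑ b ∈ C.P, ∑ j ∈ b.2, x j ^ 2 := by rw [Finset.mul_sum]
    _ ≤ S ^ 2 * ((csp : ℝ) * (L : ℝ) * ∑ j, x j ^ 2) :=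
        mul_le_mul_of_nonneg_left (sum_cols_le C x) (sq_nonneg S)
    _ = (csp : ℝ) * (L : ℝ) * S ^ 2 * euclNorm x ^ 2 := by rw [enorm_sq']; ring
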